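/- Every free Banach lattice is projective: if $F = FBL(A)$ with free generators $(\delta_a)_{a \in A}$, $X$ is a Banach lattice, $J$ a closed ideal of $X$ with quotient map $Q : X \to X/J$, $T : F \to X/J$ a bounded lattice homomorphism and $\epsilon > 0$, then there is a bounded lattice homomorphism $\hat{T} : F \to X$ with $Q \circ \hat{T} = T$ and $\|\hat{T}\| \le (1+\epsilon)\|T\|$. -/

import Mathlib

universe u v w

/-- `(F, ι)` is a free Banach lattice over `A`. -/
def IsFreeBanachLattice (A : Type u) (X : Type v)
    [NormedAddCommGroup X] [Lattice X] [HasSolidNorm X] [IsOrderedAddMonoid X] [NormedSpace ℝ X] [CompleteSpace X]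
    (ι : A → X) : Prop :=
  Bornology.IsBounded (Set.range ι) ∧
  ∀ (Y : Type w) [NormedAddCommGroup Y] [Lattice Y] [HasSolidNorm Y] [IsOrderedAddMonoid Y] [NormedSpace ℝ Y] [CompleteSpace Y]
    (κ : A → Y), Bornology.IsBounded (Set.range κ) →
    ∃! T : X →L[ℝ] Y, (∀ x y, T (x ⊔ y) = T x ⊔ T y) ∧ (∀ a, T (ι a) = κ a) ∧
      ‖T‖ = ⨆ a, ‖κ a‖

noncomputable instance : HasSolidNorm (ULift.{w} ℝ) where
  solid x y h := by
    have h' : |x.down| ≤ |y.down| := h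
    show ‖x.down‖ ≤ ‖y.down‖
    exact HasSolidNorm.solid h'

instance : IsOrderedAddMonoid (ULift.{w} ℝ) where
  add_le_add_left a b h c := by
    have h' : a.down ≤ b.down := h
    show a.down + c.down ≤ b.down + c.down
    exact add_le_add h' le_rfl

instance {P : Type*} {R : Type*} [NormedAddCommGroup P] [Lattice P] [HasSolidNorm P]
    [NormedAddCommGroup R] [Lattice R] [HasSolidNorm R] : HasSolidNorm (P × R) where
  solid x y h := by
    rcases Prod.le_def.mp h with ⟨h1, h2⟩
    have e1 : ‖x.1‖ ≤ ‖y.1‖ := HasSolidNorm.solid h1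
    have e2 : ‖x.2‖ ≤ ‖y.2‖ := HasSolidNorm.solid h2
    rw [Prod.norm_def, Prod.norm_def]
    exact max_le_max e1 e2

/-- Two continuous lattice homomorphisms out of a free Banach lattice agreeing on the
generators are equal. -/
theorem freeBanachLattice_hom_ext {A : Type u} [Nonempty A] {F : Type v}
    [NormedAddCommGroup F] [Lattice F] [HasSolidNorm F] [IsOrderedAddMonoid F] [NormedSpace ℝ F] [CompleteSpace F]
    (δ : A → F) (hF : IsFreeBanachLattice.{u, v, w} A F δ)
    {W : Type w} [NormedAddCommGroup W] [Lattice W] [HasSolidNorm W] [IsOrderedAddMonoid W] [NormedSpace ℝ W] [CompleteSpace W]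
    (S₁ S₂ : F →L[ℝ] W)
    (h1 : ∀ x y, S₁ (x ⊔ y) = S₁ x ⊔ S₁ y) (h2 : ∀ x y, S₂ (x ⊔ y) = S₂ x ⊔ S₂ y)
    (hagree : ∀ a, S₁ (δ a) = S₂ (δ a)) : S₁ = S₂ := by
  obtain ⟨M0, hM0⟩ := (isBounded_iff_forall_norm_le).mp hF.1
  set M : ℝ := max M0 0 with hMdef
  have hM : ∀ a, ‖δ a‖ ≤ M := fun a =>
    le_trans (hM0 _ (Set.mem_range_self a)) (le_max_left _ _)
  have hMnn : (0:ℝ) ≤ M := le_max_right _ _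
  set c : ℝ := 1 + ‖S₁‖ + ‖S₂‖ + ‖S₁‖ * M + ‖S₂‖ * M with hc
  have hc1 : (1:ℝ) ≤ c := by
    have := norm_nonneg S₁; have := norm_nonneg S₂
    have := mul_nonneg (norm_nonneg S₁) hMnn
    have := mul_nonneg (norm_nonneg S₂) hMnn
    simp only [hc]; linarith
  have hcnn : (0:ℝ) ≤ c := le_trans zero_le_one hc1
  have hcS₁ : ‖S₁‖ ≤ c := by
    have := mul_nonneg (norm_nonneg S₁) hMnn
    have := mul_nonneg (norm_nonneg S₂) hMnn
    have := norm_nonneg S₂; simp only [hc]; linarith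
  have hcS₂ : ‖S₂‖ ≤ c := by
    have := mul_nonneg (norm_nonneg S₁) hMnn
    have := mul_nonneg (norm_nonneg S₂) hMnn
    have := norm_nonneg S₁; simp only [hc]; linarith
  have hcS₁M : ∀ a, ‖S₁ (δ a)‖ ≤ c := by
    intro a
    have : ‖S₁ (δ a)‖ ≤ ‖S₁‖ * M :=
      le_trans (S₁.le_opNorm _) (mul_le_mul_of_nonneg_left (hM a) (norm_nonneg _))
    have h2' := mul_nonneg (norm_nonneg S₂) hMnn
    have := norm_nonneg S₁; have := norm_nonneg S₂
    simp only [hc]; linarith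
  -- the "constant c" lattice homomorphism into `ULift ℝ`
  obtain ⟨ψ, ⟨ψlat, ψval, ψnorm⟩, -⟩ :=
    hF.2 (ULift.{w} ℝ) (fun _ => ULift.up c) (by
      rw [isBounded_iff_forall_norm_le]
      exact ⟨c, by rintro x ⟨a, rfl⟩; simp [ULift.norm_def, abs_of_nonneg hcnn]⟩)
  have ψnorm' : ‖ψ‖ = c := by
    rw [ψnorm, ciSup_const]
    simp [ULift.norm_def, Real.norm_eq_abs, abs_of_nonneg hcnn]
  -- the common family
  set κ : A → W × ULift.{w} ℝ := fun a => (S₁ (δ a), ULift.up c) with hκ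
  have hκnorm : ∀ a, ‖κ a‖ = c := by
    intro a
    rw [hκ, Prod.norm_def]
    simp only
    rw [max_eq_right]
    · simp [ULift.norm_def, abs_of_nonneg hcnn]
    · simpa [ULift.norm_def, abs_of_nonneg hcnn] using hcS₁M a
  have hκbdd : Bornology.IsBounded (Set.range κ) := by
    rw [isBounded_iff_forall_norm_le]
    exact ⟨c, by rintro x ⟨a, rfl⟩; exact (hκnorm a).le⟩
  obtain ⟨T', -, huniq⟩ := hF.2 (W × ULift.{w} ℝ) κ hκbdd
  have hsupκ : (⨆ a, ‖κ a‖) = c := by simp only [hκnorm, ciSup_const]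
  -- the two candidate maps
  have key : ∀ (S : F →L[ℝ] W), (∀ x y, S (x ⊔ y) = S x ⊔ S y) → ‖S‖ ≤ c →
      (∀ a, S (δ a) = S₁ (δ a)) → S.prod ψ = T' := by
    intro S Slat hSc hSval
    apply huniq
    refine ⟨?_, ?_, ?_⟩
    · intro x y
      ext
      · simp [Slat]
      · simp [ψlat]
    · intro a
      ext
      · simp [hSval a, hκ]
      · simp [ψval a, hκ]
    · rw [hsupκ]
      apply le_antisymm
      · apply ContinuousLinearMap.opNorm_le_bound _ hcnn
        intro x
        rw [ContinuousLinearMap.prod_apply, Prod.norm_def]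
        apply max_le
        · exact le_trans (S.le_opNorm x)
            (mul_le_mul_of_nonneg_right hSc (norm_nonneg x))
        · exact le_trans (ψ.le_opNorm x)
            (mul_le_mul_of_nonneg_right (le_of_eq ψnorm') (norm_nonneg x))
      · rw [← ψnorm']
        apply ContinuousLinearMap.opNorm_le_bound _ (norm_nonneg _)
        intro x
        refine le_trans ?_ ((S.prod ψ).le_opNorm x)
        rw [ContinuousLinearMap.prod_apply, Prod.norm_def]
        exact le_max_right _ _
  have e1 : S₁.prod ψ = T' := key S₁ h1 hcS₁ (fun _ => rfl)
  have e2 : S₂.prod ψ = T' := key S₂ h2 hcS₂ (fun a => (hagree a).symm)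
  ext x
  have : (S₁.prod ψ) x = (S₂.prod ψ) x := by rw [e1, e2]
  exact congrArg Prod.fst this

/-- free Banach lattices are projective.  Quotients are formalized by
surjective lattice homomorphisms `Q` with closed kernel satisfying the quotient
norm lifting property.  Any lattice homomorphism `T` from the free Banach lattice
into the quotient lifts to `T̂` with `Q ∘ T̂ = T` and `‖T̂‖ ≤ (1+ε)‖T‖`. -/
theorem stmt_18 {A : Type u} [Nonempty A] {F : Type v}
    [NormedAddCommGroup F] [Lattice F] [HasSolidNorm F] [IsOrderedAddMonoid F] [NormedSpace ℝ F] [CompleteSpace F]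
    (δ : A → F) (hF : IsFreeBanachLattice.{u, v, w} A F δ)
    {X Z : Type w}
    [NormedAddCommGroup X] [Lattice X] [HasSolidNorm X] [IsOrderedAddMonoid X] [NormedSpace ℝ X] [CompleteSpace X]
    [NormedAddCommGroup Z] [Lattice Z] [HasSolidNorm Z] [IsOrderedAddMonoid Z] [NormedSpace ℝ Z] [CompleteSpace Z]
    (Q : X →L[ℝ] Z) (hQlat : ∀ x y, Q (x ⊔ y) = Q x ⊔ Q y)
    (hQsurj : Function.Surjective Q)
    (hker : IsClosed {x : X | Q x = 0})
    (hQnorm : ∀ (z : Z) (η : ℝ), 0 < η → ∃ x, Q x = z ∧ ‖x‖ ≤ (1 + η) * ‖z‖)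
    (T : F →L[ℝ] Z) (hTlat : ∀ x y, T (x ⊔ y) = T x ⊔ T y)
    (ε : ℝ) (hε : 0 < ε) :
    ∃ That : F →L[ℝ] X, (∀ x y, That (x ⊔ y) = That x ⊔ That y) ∧
      Q.comp That = T ∧ ‖That‖ ≤ (1 + ε) * ‖T‖ := by
  obtain ⟨M0, hM0⟩ := (isBounded_iff_forall_norm_le).mp hF.1
  set M : ℝ := max M0 0 with hMdef
  have hM : ∀ a, ‖δ a‖ ≤ M := fun a =>
    le_trans (hM0 _ (Set.mem_range_self a)) (le_max_left _ _)
  have hMnn : (0:ℝ) ≤ M := le_max_right _ _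
  have hTδbd : ∀ a, ‖T (δ a)‖ ≤ ‖T‖ * M := fun a =>
    le_trans (T.le_opNorm _) (mul_le_mul_of_nonneg_left (hM a) (norm_nonneg _))
  -- `‖T‖` equals the sup of the norms on generators
  have hTnorm : ‖T‖ = ⨆ a, ‖T (δ a)‖ := by
    obtain ⟨T', ⟨T'lat, T'val, T'norm⟩, -⟩ := hF.2 Z (fun a => T (δ a)) (by
      rw [isBounded_iff_forall_norm_le]
      exact ⟨‖T‖ * M, by rintro x ⟨a, rfl⟩; exact hTδbd a⟩)
    have : T = T' := freeBanachLattice_hom_ext δ hF T T' hTlat T'lat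
      (fun a => (T'val a).symm)
    rw [this, T'norm]
    simp only [T'val]
  have hTδle : ∀ a, ‖T (δ a)‖ ≤ ‖T‖ := by
    intro a
    rw [hTnorm]
    exact le_ciSup ⟨‖T‖ * M, by rintro r ⟨a, rfl⟩; exact hTδbd a⟩ a
  -- lift the generators
  have hx : ∀ a : A, ∃ x : X, Q x = T (δ a) ∧ ‖x‖ ≤ (1 + ε) * ‖T (δ a)‖ :=
    fun a => hQnorm (T (δ a)) ε hε
  choose x hxQ hxnorm using hx
  have hxbd : ∀ a, ‖x a‖ ≤ (1 + ε) * ‖T‖ := fun a =>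
    le_trans (hxnorm a) (mul_le_mul_of_nonneg_left (hTδle a) (by linarith))
  obtain ⟨That, ⟨Thatlat, Thatval, Thatnorm⟩, -⟩ := hF.2 X x (by
    rw [isBounded_iff_forall_norm_le]
    exact ⟨(1 + ε) * ‖T‖, by rintro y ⟨a, rfl⟩; exact hxbd a⟩)
  refine ⟨That, Thatlat, ?_, ?_⟩
  · apply freeBanachLattice_hom_ext δ hF
    · intro u v
      simp [ContinuousLinearMap.comp_apply, Thatlat, hQlat]
    · exact hTlat
    · intro a
      simp [ContinuousLinearMap.comp_apply, Thatval a, hxQ a]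
  · rw [Thatnorm]
    exact ciSup_le hxbd
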